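/- Utility of the exponential mechanism for convex losses (utility part of Theorem 3.1). There is a universal constant c > 0 such that the following holds. Let C ⊆ ℝ^p be a compact convex set with diameter ‖C‖ > 0 and positive Lebesgue measure, and suppose that for every d ∈ τ the map θ ↦ ℓ(θ; d) is convex and L-Lipschitz on C. Fix ε > 0, a dataset D of size n, and let μ_D be the Gibbs measure on C with density proportional to exp(−(εn/(2L‖C‖))·𝓛(θ; D)). Then E_{θ ∼ μ_D}[𝓛(θ; D)] − min_{θ ∈ C} 𝓛(θ; D) ≤ c · Lp‖C‖/(εn). -/

import Mathlib

open MeasureTheory Real Set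
open scoped ENNReal NNReal Topology

noncomputable section

/-- ℝ^p as a Euclidean space. -/
abbrev Eu (p : ℕ) := EuclideanSpace ℝ (Fin p)

/-- The Gibbs measure on `C` with inverse temperature `β` for the potential `F`:
the probability measure whose density with respect to Lebesgue measure restricted
to `C` is proportional to `exp (-β * F θ)`. -/
def gibbs {p : ℕ} (C : Set (Eu p)) (β : ℝ) (F : Eu p → ℝ) : Measure (Eu p) :=
  (∫⁻ θ in C, ENNReal.ofReal (Real.exp (-β * F θ)))⁻¹ •
    (volume.restrict C).withDensity fun θ => ENNReal.ofReal (Real.exp (-β * F θ))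

/-- The empirical loss `𝓛(θ; D) = (1/n) ∑ i, ℓ(θ; dᵢ)`. -/
def empLoss {p n : ℕ} {τ : Type*} (ℓ : Eu p → τ → ℝ) (D : Fin n → τ) (θ : Eu p) : ℝ :=
  (1 / (n : ℝ)) * ∑ i, ℓ θ (D i)

set_option maxHeartbeats 1000000 in
/-- Core estimate: for a convex potential on a convex body, the Gibbs average exceeds the
minimum by at most `p / β`. -/
theorem gibbs_key {p : ℕ} {C : Set (Eu p)} (hK : IsCompact C)
    (hconv : Convex ℝ C) (hvol : 0 < volume C) {F : Eu p → ℝ}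
    (hFc : ContinuousOn F C)
    (hFcx : ∀ ⦃x⦄, x ∈ C → ∀ ⦃y⦄, y ∈ C → ∀ ⦃a b : ℝ⦄, 0 ≤ a → 0 ≤ b → a + b = 1 →
      F (a • x + b • y) ≤ a * F x + b * F y)
    {β : ℝ} (hβ : 0 < β) :
    ∫ θ, F θ ∂(gibbs C β F) - sInf (F '' C) ≤ p / β := by
  have hCmeas : MeasurableSet C := hK.measurableSet
  have hCne : C.Nonempty := nonempty_of_measure_ne_zero hvol.ne'
  obtain ⟨θs, hθsC, hmin⟩ := hK.exists_isMinOn hCne hFc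
  set m : ℝ := F θs with hm
  have hsInf : sInf (F '' C) = m := by
    refine IsLeast.csInf_eq ⟨mem_image_of_mem _ hθsC, ?_⟩
    rintro y ⟨x, hx, rfl⟩; exact hmin hx
  -- basic integrands
  set g : Eu p → ℝ := fun θ => exp (-β * F θ) with hg
  have hgc : ContinuousOn g C := by
    apply Real.continuous_exp.comp_continuousOn
    exact continuousOn_const.mul hFc
  have intZ : IntegrableOn g C := hgc.integrableOn_compact hK
  have intF : IntegrableOn (fun θ => F θ * g θ) C := (hFc.mul hgc).integrableOn_compact hK
  have intJ : IntegrableOn (fun θ => (F θ - m) * g θ) C :=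
    ((hFc.sub continuousOn_const).mul hgc).integrableOn_compact hK
  set Z : ℝ := ∫ θ in C, g θ with hZ
  set J : ℝ := ∫ θ in C, (F θ - m) * g θ with hJ
  have hgpos : ∀ θ, 0 < g θ := fun θ => exp_pos _
  -- Z > 0
  have hZpos : 0 < Z := by
    obtain ⟨θM, hθMC, hmax⟩ := hK.exists_isMaxOn hCne hFc
    have hle : ∀ θ ∈ C, exp (-β * F θM) ≤ g θ := by
      intro θ hθ
      have hFle : F θ ≤ F θM := hmax hθ
      exact exp_le_exp.2 (by nlinarith)
    have h1 := setIntegral_ge_of_const_le hCmeas hK.measure_lt_top.ne hle intZ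
    have h2 : 0 < (volume C).toReal :=
      ENNReal.toReal_pos hvol.ne' hK.measure_lt_top.ne
    rw [smul_eq_mul, ← hZ] at h1
    have h2' : 0 < volume.real C := h2
    nlinarith [exp_pos (-β * F θM)]
  -- the key inequality for each s ∈ Ioo 0 1
  have key : ∀ s ∈ Ioo (0:ℝ) 1, s ^ p * (β * J) ≤ Z * ∑ i ∈ Finset.range p, s ^ i := by
    intro s hs
    obtain ⟨hs0, hs1⟩ := hs
    set T : Eu p → Eu p := fun θ => θs + s • (θ - θs) with hT
    have hTconv : ∀ θ ∈ C, T θ = (1 - s) • θs + s • θ := by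
      intro θ hθ
      simp only [hT, smul_sub, sub_smul, one_smul]
      abel
    have hTsub : T '' C ⊆ C := by
      rintro _ ⟨θ, hθ, rfl⟩
      rw [hTconv θ hθ]
      exact hconv hθsC hθ (by linarith) hs0.le (by ring)
    have hTderiv : ∀ x ∈ C, HasFDerivWithinAt T
        ((fun _ => s • (1 : Eu p →L[ℝ] Eu p)) x) C x := by
      intro x hx
      have : HasFDerivAt T (s • (1 : Eu p →L[ℝ] Eu p)) x := by
        exact (((hasFDerivAt_id x).sub_const θs).const_smul s).const_add θs
      exact this.hasFDerivWithinAt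
    have hTinj : InjOn T C := by
      intro a _ b _ hab
      have : s • (a - θs) = s • (b - θs) := by
        simpa [hT] using hab
      have := smul_right_injective (Eu p) hs0.ne' this
      simpa [sub_left_inj] using this
    have hdet : |(s • (1 : Eu p →L[ℝ] Eu p)).det| = s ^ p := by
      simp only [ContinuousLinearMap.det, ContinuousLinearMap.coe_smul,
        LinearMap.det_smul, ContinuousLinearMap.one_def, ContinuousLinearMap.coe_id,
        LinearMap.det_id, finrank_euclideanSpace_fin, mul_one]
      exact abs_of_pos (pow_pos hs0 p)
    -- change of variables
    have hCoV : ∫ θ in T '' C, g θ = ∫ θ in C, s ^ p * g (T θ) := by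
      have := integral_image_eq_integral_abs_det_fderiv_smul volume hCmeas hTderiv hTinj g
      simpa [hdet, smul_eq_mul] using this
    have hFTcont : ContinuousOn (fun θ => g (T θ)) C := by
      have hTc : Continuous T := by
        exact continuous_const.add ((continuous_id.sub continuous_const).const_smul s)
      exact hgc.comp hTc.continuousOn (fun θ hθ => hTsub (mem_image_of_mem _ hθ))
    have int1 : IntegrableOn (fun θ => s ^ p * g (T θ)) C :=
      (hFTcont.const_smul (s ^ p)).integrableOn_compact hK
    have int2 : IntegrableOn (fun θ => s ^ p * (g θ * (1 + β * (1 - s) * (F θ - m)))) C := by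
      apply Integrable.const_mul
      have : ContinuousOn (fun θ => g θ * (1 + β * (1 - s) * (F θ - m))) C :=
        hgc.mul (continuousOn_const.add (continuousOn_const.mul (hFc.sub continuousOn_const)))
      exact this.integrableOn_compact hK
    -- pointwise bound
    have hpt : ∀ θ ∈ C, s ^ p * (g θ * (1 + β * (1 - s) * (F θ - m))) ≤ s ^ p * g (T θ) := by
      intro θ hθ
      have hc : F (T θ) ≤ (1 - s) * m + s * F θ := by
        rw [hTconv θ hθ]
        exact hFcx hθsC hθ (by linarith) hs0.le (by ring)
      have h1 : g θ * exp (β * (1 - s) * (F θ - m)) ≤ g (T θ) := by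
        rw [hg, ← Real.exp_add]
        apply exp_le_exp.2
        nlinarith
      have h2 : g θ * (1 + β * (1 - s) * (F θ - m)) ≤ g θ * exp (β * (1 - s) * (F θ - m)) := by
        apply mul_le_mul_of_nonneg_left _ (hgpos θ).le
        have := Real.add_one_le_exp (β * (1 - s) * (F θ - m))
        linarith
      have := h2.trans h1
      nlinarith [pow_pos hs0 p]
    have step1 : ∫ θ in T '' C, g θ ≤ Z := by
      apply setIntegral_mono_set intZ
      · exact Filter.Eventually.of_forall (fun θ => (hgpos θ).le)
      · exact HasSubset.Subset.eventuallyLE hTsub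
    have step2 : ∫ θ in C, s ^ p * (g θ * (1 + β * (1 - s) * (F θ - m))) ≤
        ∫ θ in C, s ^ p * g (T θ) :=
      setIntegral_mono_on int2 int1 hCmeas hpt
    have step3 : ∫ θ in C, s ^ p * (g θ * (1 + β * (1 - s) * (F θ - m))) =
        s ^ p * (Z + β * (1 - s) * J) := by
      have : (fun θ => s ^ p * (g θ * (1 + β * (1 - s) * (F θ - m)))) =
          fun θ => s ^ p * g θ + (s ^ p * (β * (1 - s))) * ((F θ - m) * g θ) := by
        funext θ; ring
      rw [this, integral_add ((intZ.const_mul _)) (intJ.const_mul _),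
        integral_const_mul, integral_const_mul, ← hZ, ← hJ]
      ring
    have hchain : s ^ p * (Z + β * (1 - s) * J) ≤ Z := by
      calc s ^ p * (Z + β * (1 - s) * J) = ∫ θ in C, s ^ p * (g θ * (1 + β * (1 - s) * (F θ - m))) := step3.symm
        _ ≤ ∫ θ in C, s ^ p * g (T θ) := step2
        _ = ∫ θ in T '' C, g θ := hCoV.symm
        _ ≤ Z := step1
    -- rearrange using 1 - s^p = (1-s) * geom sum
    have hgeom : (1 - s) * ∑ i ∈ Finset.range p, s ^ i = 1 - s ^ p := by
      have := geom_sum_mul s p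
      nlinarith [this]
    have h1s : 0 < 1 - s := by linarith
    -- s^p * (1-s) * (β J) ≤ Z * (1 - s^p) = Z * (1-s) * geom
    nlinarith [hchain, hgeom]
  -- pass to the limit s → 1⁻
  have hlim : β * J ≤ Z * p := by
    have hne : (𝓝[Ioo (0:ℝ) 1] 1).NeBot := right_nhdsWithin_Ioo_neBot one_pos
    have h1 : Filter.Tendsto (fun s : ℝ => s ^ p * (β * J)) (𝓝[Ioo (0:ℝ) 1] 1)
        (𝓝 (β * J)) := by
      have hc1 : Continuous fun s : ℝ => s ^ p * (β * J) :=
        (continuous_pow p).mul continuous_const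
      have := hc1.tendsto (1:ℝ)
      simpa using this.mono_left nhdsWithin_le_nhds
    have h2 : Filter.Tendsto (fun s : ℝ => Z * ∑ i ∈ Finset.range p, s ^ i)
        (𝓝[Ioo (0:ℝ) 1] 1) (𝓝 (Z * p)) := by
      have hc : Continuous fun s : ℝ => Z * ∑ i ∈ Finset.range p, s ^ i :=
        continuous_const.mul (continuous_finset_sum _ fun i _ => continuous_pow i)
      have := hc.tendsto (1:ℝ)
      simpa using this.mono_left nhdsWithin_le_nhds
    exact le_of_tendsto_of_tendsto h1 h2
      (Filter.eventually_of_mem self_mem_nhdsWithin (fun s hs => key s hs))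
  -- compute the Gibbs integral
  have hmeasF : AEMeasurable F (volume.restrict C) := hFc.aemeasurable hCmeas
  have hlint : (∫⁻ θ in C, ENNReal.ofReal (exp (-β * F θ))) = ENNReal.ofReal Z := by
    rw [← ofReal_integral_eq_lintegral_ofReal intZ
      (Filter.Eventually.of_forall (fun θ => (exp_pos _).le))]
  have hint : ∫ θ, F θ ∂(gibbs C β F) = Z⁻¹ * ∫ θ in C, g θ * F θ := by
    rw [gibbs, integral_smul_measure, hlint]
    have hnn : AEMeasurable (fun θ => (exp (-β * F θ)).toNNReal) (volume.restrict C) := by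
      exact (measurable_exp.comp_aemeasurable (hmeasF.const_mul (-β))).real_toNNReal
    have : ((volume.restrict C).withDensity fun θ => ENNReal.ofReal (exp (-β * F θ))) =
        (volume.restrict C).withDensity fun θ => ((exp (-β * F θ)).toNNReal : ℝ≥0∞) := rfl
    rw [this, integral_withDensity_eq_integral_smul₀ hnn F]
    have hcong : (fun x => (exp (-β * F x)).toNNReal • F x) = fun θ => g θ * F θ := by
      funext θ
      rw [NNReal.smul_def, Real.coe_toNNReal _ (exp_pos _).le, smul_eq_mul]
    rw [ENNReal.toReal_inv, ENNReal.toReal_ofReal hZpos.le, smul_eq_mul, hcong]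
  have hIJ : ∫ θ in C, g θ * F θ = J + m * Z := by
    have : (fun θ => (F θ - m) * g θ) = fun θ => g θ * F θ - m * g θ := by
      funext θ; ring
    have hsub : ∫ θ in C, (F θ - m) * g θ = (∫ θ in C, g θ * F θ) - m * Z := by
      rw [this, integral_sub (by simpa [mul_comm] using intF.integrable) (intZ.const_mul m),
        integral_const_mul]
    rw [hJ, hsub]
    ring
  rw [hint, hIJ, hsInf]
  have : Z⁻¹ * (J + m * Z) - m = J / Z := by
    field_simp
    ring
  rw [this]
  rw [div_le_div_iff₀ hZpos hβ]
  nlinarith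

/-- utility of the exponential mechanism for convex losses
(utility part of Theorem 3.1). -/
theorem exponential_mechanism_utility_convex :
    ∃ c : ℝ, 0 < c ∧
      ∀ (p n : ℕ), 1 ≤ p → 1 ≤ n → ∀ (τ : Type) (ℓ : Eu p → τ → ℝ),
      ∀ (C : Set (Eu p)), IsCompact C → Convex ℝ C →
        0 < Metric.diam C → 0 < volume C →
      ∀ (L : ℝ), 0 < L →
        (∀ d : τ, ConvexOn ℝ C (fun θ => ℓ θ d)) →
        (∀ d : τ, LipschitzOnWith L.toNNReal (fun θ => ℓ θ d) C) →
      ∀ (ε : ℝ), 0 < ε →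
      ∀ (D : Fin n → τ),
        (∫ θ, empLoss ℓ D θ
            ∂(gibbs C (ε * n / (2 * L * Metric.diam C)) (empLoss ℓ D))) -
          sInf (empLoss ℓ D '' C) ≤
        c * L * p * Metric.diam C / (ε * n) := by
  refine ⟨2, two_pos, ?_⟩
  intro p n hp hn τ ℓ C hK hconv hdiam hvol L hL hcx hlip ε hε D
  set F := empLoss ℓ D with hF
  have hn0 : (0:ℝ) < n := by exact_mod_cast hn
  have hFc : ContinuousOn F C := by
    apply ContinuousOn.mul continuousOn_const
    exact continuousOn_finset_sum _ fun i _ => (hlip (D i)).continuousOn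
  have hFcx : ∀ ⦃x⦄, x ∈ C → ∀ ⦃y⦄, y ∈ C → ∀ ⦃a b : ℝ⦄, 0 ≤ a → 0 ≤ b → a + b = 1 →
      F (a • x + b • y) ≤ a * F x + b * F y := by
    intro x hx y hy a b ha hb hab
    have hsum : ∑ i, ℓ (a • x + b • y) (D i) ≤ ∑ i, (a * ℓ x (D i) + b * ℓ y (D i)) := by
      refine Finset.sum_le_sum fun i _ => ?_
      have := (hcx (D i)).2 hx hy ha hb hab
      simpa [smul_eq_mul] using this
    calc F (a • x + b • y) = (1/(n:ℝ)) * ∑ i, ℓ (a • x + b • y) (D i) := rfl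
      _ ≤ (1/(n:ℝ)) * ∑ i, (a * ℓ x (D i) + b * ℓ y (D i)) := by
          apply mul_le_mul_of_nonneg_left hsum (by positivity)
      _ = a * F x + b * F y := by
          rw [Finset.sum_add_distrib, ← Finset.mul_sum, ← Finset.mul_sum, hF]
          simp only [empLoss]
          ring
  have hβ : 0 < ε * n / (2 * L * Metric.diam C) :=
    div_pos (mul_pos hε hn0) (by positivity)
  have key := gibbs_key hK hconv hvol hFc hFcx hβ
  refine key.trans (le_of_eq ?_)
  field_simp

end
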